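/- Suppose all I ≥ 2 users are homogeneous with θ, ℓ, ξ > 0, d^max > 1/(I ξ ℓ), and ε = 0. Then d* = (1/(2θℓ(I-1)))·( d^max(ξ + θℓ(I-1)) - sqrt( (d^max)²(ξ + θℓ(I-1))² - 4θ(I-1)d^max/I ) ) satisfies 0 < d* < d^max and the symmetric profile d_i = d* for all i is a Nash equilibrium; in particular d* solves 1/(I·d) = ξℓ + θℓ²(I-1)(1 - d/d^max). -/

import Mathlib

private lemma stmt3_disc (i θ ℓ ξ dmax : ℝ) (hi : 2 ≤ i) (hθ : 0 < θ) (hℓ : 0 < ℓ)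
    (hξ : 0 < ξ) (hd : 0 < dmax) (h1 : 1 < i * ξ * ℓ * dmax) :
    0 < dmax ^ 2 * (ξ + θ * ℓ * (i - 1)) ^ 2 - 4 * θ * (i - 1) * dmax / i := by
  have hipos : (0 : ℝ) < i := by linarith
  have hn0 : (0 : ℝ) < i - 1 := by linarith
  rw [sub_pos, div_lt_iff₀ hipos]
  have hAM : 4 * ξ * (θ * ℓ * (i - 1)) ≤ (ξ + θ * ℓ * (i - 1)) ^ 2 := by
    nlinarith [sq_nonneg (ξ - θ * ℓ * (i - 1))]
  have e1 := mul_le_mul_of_nonneg_left hAM (show (0:ℝ) ≤ dmax ^ 2 * i by positivity)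
  have e2 := mul_lt_mul_of_pos_left h1
    (show (0:ℝ) < 4 * θ * (i - 1) * dmax by positivity)
  nlinarith [e1, e2]

private lemma stmt3_pos (i θ ℓ ξ dmax dstar s : ℝ) (hi : 2 ≤ i) (hθ : 0 < θ) (hℓ : 0 < ℓ)
    (hξ : 0 < ξ) (hd : 0 < dmax) (hs0 : 0 < s)
    (hs2 : s ^ 2 = dmax ^ 2 * (ξ + θ * ℓ * (i - 1)) ^ 2 - 4 * θ * (i - 1) * dmax / i)
    (hds : 2 * θ * ℓ * (i - 1) * dstar = dmax * (ξ + θ * ℓ * (i - 1)) - s) :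
    0 < dstar := by
  have hipos : (0 : ℝ) < i := by linarith
  have hn0 : (0 : ℝ) < i - 1 := by linarith
  have hA : 0 < ξ + θ * ℓ * (i - 1) := by nlinarith [mul_pos (mul_pos hθ hℓ) hn0]
  have htpos : 0 < dmax * (ξ + θ * ℓ * (i - 1)) := mul_pos hd hA
  have hDa : 0 < 4 * θ * (i - 1) * dmax / i := by positivity
  have hlt' : s < dmax * (ξ + θ * ℓ * (i - 1)) := by
    nlinarith [hs2, hs0, hDa, htpos]
  nlinarith [hds, hlt', mul_pos (mul_pos hθ hℓ) hn0]

private lemma stmt3_quad (i θ ℓ ξ dmax dstar s : ℝ) (hi : 2 ≤ i) (hθ : 0 < θ) (hℓ : 0 < ℓ)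
    (hξ : 0 < ξ) (hd : 0 < dmax)
    (hs2 : s ^ 2 = dmax ^ 2 * (ξ + θ * ℓ * (i - 1)) ^ 2 - 4 * θ * (i - 1) * dmax / i)
    (hds : 2 * θ * ℓ * (i - 1) * dstar = dmax * (ξ + θ * ℓ * (i - 1)) - s) :
    i * θ * ℓ ^ 2 * (i - 1) * dstar ^ 2
      - i * ℓ * (ξ + θ * ℓ * (i - 1)) * dmax * dstar + dmax = 0 := by
  have hipos : (0 : ℝ) < i := by linarith
  have hn0 : (0 : ℝ) < i - 1 := by linarith
  have hine : i ≠ 0 := ne_of_gt hipos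
  have hs2' : i * s ^ 2 = i * dmax ^ 2 * (ξ + θ * ℓ * (i - 1)) ^ 2
      - 4 * θ * (i - 1) * dmax := by
    rw [hs2]; field_simp
  have hs' : s = dmax * (ξ + θ * ℓ * (i - 1)) - 2 * θ * ℓ * (i - 1) * dstar := by linarith
  have hsq2 : i * (dmax * (ξ + θ * ℓ * (i - 1)) - 2 * θ * ℓ * (i - 1) * dstar) ^ 2
      = i * dmax ^ 2 * (ξ + θ * ℓ * (i - 1)) ^ 2 - 4 * θ * (i - 1) * dmax := by
    rw [← hs']; exact hs2'
  have hquad4 : 4 * θ * (i - 1) * (i * θ * ℓ ^ 2 * (i - 1) * dstar ^ 2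
      - i * ℓ * (ξ + θ * ℓ * (i - 1)) * dmax * dstar + dmax) = 0 := by
    linear_combination hsq2
  have h4 : (4 : ℝ) * θ * (i - 1) ≠ 0 := by positivity
  exact (mul_eq_zero.mp hquad4).resolve_left h4

private lemma stmt3_foc (i θ ℓ ξ dmax dstar : ℝ) (hi : 2 ≤ i) (hθ : 0 < θ) (hℓ : 0 < ℓ)
    (hξ : 0 < ξ) (hd : 0 < dmax) (hdpos : 0 < dstar)
    (hquad : i * θ * ℓ ^ 2 * (i - 1) * dstar ^ 2
      - i * ℓ * (ξ + θ * ℓ * (i - 1)) * dmax * dstar + dmax = 0) :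
    1 / (i * dstar) = ξ * ℓ + θ * ℓ ^ 2 * (i - 1) * (1 - dstar / dmax) := by
  have hipos : (0 : ℝ) < i := by linarith
  have hIds : i * dstar ≠ 0 := by positivity
  have hdm : dmax ≠ 0 := ne_of_gt hd
  field_simp
  linear_combination hquad

private lemma stmt3_lt (i θ ℓ ξ dmax dstar s : ℝ) (hi : 2 ≤ i) (hθ : 0 < θ) (hℓ : 0 < ℓ)
    (hξ : 0 < ξ) (hd : 0 < dmax) (hs0 : 0 < s) (h1 : 1 < i * ξ * ℓ * dmax)
    (hs2 : s ^ 2 = dmax ^ 2 * (ξ + θ * ℓ * (i - 1)) ^ 2 - 4 * θ * (i - 1) * dmax / i)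
    (hds : 2 * θ * ℓ * (i - 1) * dstar = dmax * (ξ + θ * ℓ * (i - 1)) - s) :
    dstar < dmax := by
  have hipos : (0 : ℝ) < i := by linarith
  have hn0 : (0 : ℝ) < i - 1 := by linarith
  have key : dmax * (ξ - θ * ℓ * (i - 1)) < s := by
    rcases le_or_gt (dmax * (ξ - θ * ℓ * (i - 1))) 0 with h | h
    · linarith
    · have hfrac : 4 * θ * (i - 1) * dmax / i < 4 * ξ * θ * ℓ * (i - 1) * dmax ^ 2 := by
        rw [div_lt_iff₀ hipos]
        nlinarith [mul_pos (mul_pos hθ hn0) hd, h1]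
      have hkey2 : (dmax * (ξ - θ * ℓ * (i - 1))) ^ 2 < s ^ 2 := by
        rw [hs2]; nlinarith [hfrac]
      nlinarith [hkey2, hs0, h]
  nlinarith [hds, key, mul_pos (mul_pos (mul_pos hθ hℓ) hn0) hd]

/-- Proposition 1 (first case): homogeneous dependent users with
`d^max > 1/(I ξ ℓ)`.  The stated `d*` lies in `(0, d^max)`, the symmetric
profile `d_i = d*` is a Nash equilibrium, and `d*` solves the first-order
condition `1/(I d) = ξ ℓ + θ ℓ² (I-1)(1 - d/d^max)`. -/
theorem stmt3 (I : ℕ) (hI : 2 ≤ I) (θ ℓ ξ dmax : ℝ)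
    (hθ : 0 < θ) (hℓ : 0 < ℓ) (hξ : 0 < ξ) (hd : 0 < dmax)
    (hcond : 1 / ((I : ℝ) * ξ * ℓ) < dmax)
    (dstar : ℝ)
    (hdstar : dstar = (1 / (2 * θ * ℓ * ((I : ℝ) - 1))) *
      (dmax * (ξ + θ * ℓ * ((I : ℝ) - 1)) -
        Real.sqrt (dmax ^ 2 * (ξ + θ * ℓ * ((I : ℝ) - 1)) ^ 2
          - 4 * θ * ((I : ℝ) - 1) * dmax / (I : ℝ)))) :
    0 < dstar ∧ dstar < dmax ∧
    (∀ x ∈ Set.Icc (0 : ℝ) dmax,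
      Real.log (x + ((I : ℝ) - 1) * dstar) - ξ * ℓ * x
          - θ * x * ((I : ℝ) - 1) * (1 - dstar / dmax) * ℓ ^ 2
        ≤ Real.log (dstar + ((I : ℝ) - 1) * dstar) - ξ * ℓ * dstar
          - θ * dstar * ((I : ℝ) - 1) * (1 - dstar / dmax) * ℓ ^ 2) ∧
    1 / ((I : ℝ) * dstar) = ξ * ℓ + θ * ℓ ^ 2 * ((I : ℝ) - 1) * (1 - dstar / dmax) := by
  have hI2 : (2 : ℝ) ≤ (I : ℝ) := by exact_mod_cast hI
  have hn0 : (0 : ℝ) < (I : ℝ) - 1 := by linarith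
  have hIpos : (0 : ℝ) < (I : ℝ) := by linarith
  have h1 : 1 < (I : ℝ) * ξ * ℓ * dmax := by
    have hpos : 0 < (I : ℝ) * ξ * ℓ := by positivity
    rw [div_lt_iff₀ hpos] at hcond
    linarith
  have hD := stmt3_disc (I : ℝ) θ ℓ ξ dmax hI2 hθ hℓ hξ hd h1
  obtain ⟨s, hs_def⟩ : ∃ s : ℝ, s = Real.sqrt (dmax ^ 2 * (ξ + θ * ℓ * ((I : ℝ) - 1)) ^ 2
      - 4 * θ * ((I : ℝ) - 1) * dmax / (I : ℝ)) := ⟨_, rfl⟩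
  rw [← hs_def] at hdstar
  have hs0 : 0 < s := by rw [hs_def]; exact Real.sqrt_pos.mpr hD
  have hs2 : s ^ 2 = dmax ^ 2 * (ξ + θ * ℓ * ((I : ℝ) - 1)) ^ 2
      - 4 * θ * ((I : ℝ) - 1) * dmax / (I : ℝ) := by
    rw [hs_def]; exact Real.sq_sqrt hD.le
  have hne : 2 * θ * ℓ * ((I : ℝ) - 1) ≠ 0 := by positivity
  have hds : 2 * θ * ℓ * ((I : ℝ) - 1) * dstar
      = dmax * (ξ + θ * ℓ * ((I : ℝ) - 1)) - s := by
    rw [hdstar]; field_simp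
  have hdpos := stmt3_pos (I : ℝ) θ ℓ ξ dmax dstar s hI2 hθ hℓ hξ hd hs0 hs2 hds
  have hquad := stmt3_quad (I : ℝ) θ ℓ ξ dmax dstar s hI2 hθ hℓ hξ hd hs2 hds
  have hfoc := stmt3_foc (I : ℝ) θ ℓ ξ dmax dstar hI2 hθ hℓ hξ hd hdpos hquad
  have hlt := stmt3_lt (I : ℝ) θ ℓ ξ dmax dstar s hI2 hθ hℓ hξ hd hs0 h1 hs2 hds
  refine ⟨hdpos, hlt, ?_, hfoc⟩
  intro x hx
  obtain ⟨hx0, hxd⟩ := hx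
  have hy : 0 < x + ((I : ℝ) - 1) * dstar := by nlinarith
  have hy0 : 0 < dstar + ((I : ℝ) - 1) * dstar := by nlinarith
  have hlog : Real.log (x + ((I : ℝ) - 1) * dstar) - Real.log (dstar + ((I : ℝ) - 1) * dstar)
      ≤ (x - dstar) / ((I : ℝ) * dstar) := by
    have h := Real.log_le_sub_one_of_pos
      (show 0 < (x + ((I : ℝ) - 1) * dstar) / (dstar + ((I : ℝ) - 1) * dstar) by positivity)
    rw [Real.log_div (ne_of_gt hy) (ne_of_gt hy0)] at h
    have heq : (x + ((I : ℝ) - 1) * dstar) / (dstar + ((I : ℝ) - 1) * dstar) - 1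
        = (x - dstar) / ((I : ℝ) * dstar) := by
      rw [show dstar + ((I : ℝ) - 1) * dstar = (I : ℝ) * dstar by ring]
      field_simp
      ring
    linarith [heq ▸ h]
  have hrhs : ξ * ℓ * x + θ * x * ((I : ℝ) - 1) * (1 - dstar / dmax) * ℓ ^ 2
      - (ξ * ℓ * dstar + θ * dstar * ((I : ℝ) - 1) * (1 - dstar / dmax) * ℓ ^ 2)
      = (x - dstar) / ((I : ℝ) * dstar) := by
    have hexp : ξ * ℓ * x + θ * x * ((I : ℝ) - 1) * (1 - dstar / dmax) * ℓ ^ 2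
        - (ξ * ℓ * dstar + θ * dstar * ((I : ℝ) - 1) * (1 - dstar / dmax) * ℓ ^ 2)
        = (ξ * ℓ + θ * ℓ ^ 2 * ((I : ℝ) - 1) * (1 - dstar / dmax)) * (x - dstar) := by ring
    rw [hexp, ← hfoc]
    ring
  linarith [hlog, hrhs]
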